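/- Let U be an n×n real matrix all of whose off-diagonal entries are nonpositive (a Z-matrix). If U is positive definite (i.e., U is symmetric with xᵀUx > 0 for x ≠ 0), then U is invertible and all entries of U⁻¹ are nonnegative. -/

import Mathlib

open Matrix

/-- a symmetric positive definite Z-matrix (all off-diagonal entries
nonpositive) is invertible with entrywise nonnegative inverse. -/
theorem stmt13 (n : ℕ) (U : Matrix (Fin n) (Fin n) ℝ)
    (hZ : ∀ i j, i ≠ j → U i j ≤ 0) (hU : U.PosDef) :
    IsUnit U.det ∧ ∀ i j, 0 ≤ U⁻¹ i j := by
  have hdet : IsUnit U.det := isUnit_iff_ne_zero.mpr hU.det_pos.ne'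
  refine ⟨hdet, ?_⟩
  intro i j
  -- x is the j-th column of U⁻¹
  set x : Fin n → ℝ := fun k => U⁻¹ k j with hxdef
  have hUx : U.mulVec x = fun k => if k = j then 1 else 0 := by
    funext k
    have h1 : U * U⁻¹ = 1 := Matrix.mul_nonsing_inv U hdet
    have := congrFun (congrFun h1 k) j
    simpa [Matrix.mul_apply, Matrix.one_apply, Matrix.mulVec, dotProduct,
      hxdef] using this
  -- positive and negative parts
  set p : Fin n → ℝ := fun k => max (x k) 0 with hpdef
  set m : Fin n → ℝ := fun k => max (-(x k)) 0 with hmdef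
  have hm0 : ∀ k, 0 ≤ m k := fun k => le_max_right _ _
  have hp0 : ∀ k, 0 ≤ p k := fun k => le_max_right _ _
  have hpm : ∀ k, p k * m k = 0 := by
    intro k
    rcases le_total (x k) 0 with h | h
    · have : p k = 0 := max_eq_right h
      simp [this]
    · have : m k = 0 := max_eq_right (neg_nonpos.mpr h)
      simp [this]
  have hxpm : x = p - m := by
    funext k
    simp only [hpdef, hmdef, Pi.sub_apply]
    rcases le_total (x k) 0 with h | h
    · rw [max_eq_right h, max_eq_left (neg_nonneg.mpr h)]; ring
    · rw [max_eq_left h, max_eq_right (neg_nonpos.mpr h)]; ring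
  -- m ⬝ᵥ U *ᵥ p ≤ 0
  have hkey : m ⬝ᵥ U.mulVec p ≤ 0 := by
    simp only [dotProduct, Matrix.mulVec]
    apply Finset.sum_nonpos
    intro a _
    rw [Finset.mul_sum]
    apply Finset.sum_nonpos
    intro b _
    by_cases hab : a = b
    · subst hab
      have heq : m a * (U a a * p a) = U a a * (p a * m a) := by ring
      rw [heq, hpm a, mul_zero]
    · have hZab := hZ a b hab
      have := mul_nonneg (hm0 a) (hp0 b)
      nlinarith
  -- m ⬝ᵥ U *ᵥ x = m j ≥ 0
  have hmx : m ⬝ᵥ U.mulVec x = m j := by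
    rw [hUx, dotProduct]
    simp [Finset.sum_ite_eq', mul_comm]
  have hmUm : m ⬝ᵥ U.mulVec m ≤ 0 := by
    have h1 : m ⬝ᵥ U.mulVec x = m ⬝ᵥ U.mulVec p - m ⬝ᵥ U.mulVec m := by
      rw [hxpm, Matrix.mulVec_sub, dotProduct_sub]
    have h2 : 0 ≤ m j := hm0 j
    linarith [hmx ▸ h1]
  -- hence m = 0 by positive definiteness
  have hmzero : m = 0 := by
    by_contra hne
    have := hU.dotProduct_mulVec_pos hne
    rw [star_trivial] at this
    linarith
  -- conclude
  have h0 : m i = 0 := by rw [hmzero]; rfl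
  have hxi : -(x i) ≤ 0 := h0 ▸ le_max_left _ _
  simpa [hxdef] using neg_nonpos.mp hxi
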